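/- Dinversion does not preserve normal maps in the category of commutative monoids. Concretely, let L be the pentagon monoidal semilattice with elements {0, C, B, D, A} ordered by 0 < C < B < A and 0 < D < A with D incomparable to B and C, viewed as a commutative monoid under join. Then: (1) the composite α : ↓D ↪ L ↠ L/↓B (where L/↓B ≅ ↑B via l ↦ l ∨ B) is an isomorphism of monoids, hence a normal morphism; (2) its dinverse β : ↓B ↪ L ↠ L/↓D (where L/↓D ≅ ↑D via l ↦ l ∨ D) sends both B and C to A, hence is not injective; (3) β is antinormal but not a normal morphism, i.e. β admits no factorization as a normal epimorphism followed by a normal monomorphism in CommMon. -/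

import Mathlib

/-- The pentagon monoidal semilattice `0 < C < B < A`, `0 < D < A`,
with `D` incomparable to `B` and `C`. -/
inductive Pent : Type
  | zero | c | b | d | a
  deriving DecidableEq

instance : Fintype Pent :=
  ⟨{Pent.zero, Pent.c, Pent.b, Pent.d, Pent.a}, by intro x; cases x <;> decide⟩

namespace Pent

/-- The order of the pentagon, as a Boolean relation. -/
def leB : Pent → Pent → Bool
  | zero, _ => true
  | _, a => true
  | c, c => true
  | c, b => true
  | b, b => true
  | d, d => true
  | _, _ => false

/-- The join operation of the pentagon. -/
def supP : Pent → Pent → Pent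
  | zero, x => x
  | x, zero => x
  | a, _ => a
  | _, a => a
  | c, c => c
  | c, b => b
  | b, c => b
  | b, b => b
  | d, d => d
  | c, d => a
  | d, c => a
  | b, d => a
  | d, b => a

instance : LE Pent := ⟨fun x y => leB x y = true⟩

instance : DecidableRel (· ≤ · : Pent → Pent → Prop) := fun x y =>
  inferInstanceAs (Decidable (leB x y = true))

instance : SemilatticeSup Pent where
  sup := supP
  le := (· ≤ ·)
  le_refl := by decide
  le_trans := by decide
  le_antisymm := by decide
  le_sup_left := by decide
  le_sup_right := by decide
  sup_le := by decide

instance : OrderBot Pent where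
  bot := zero
  bot_le := by decide

/-- The pentagon as a commutative monoid `(L, ⊔, ⊥)`. -/
instance : CommMonoid Pent where
  mul := (· ⊔ ·)
  one := zero
  mul_assoc := by decide
  one_mul := by decide
  mul_one := by decide
  mul_comm := by decide

end Pent

open Pent

/-- The normal submonoid `↓B` of the pentagon. -/
def DownB : Type := {x : Pent // x ≤ Pent.b}

/-- The normal submonoid `↓D` of the pentagon. -/
def DownD : Type := {x : Pent // x ≤ Pent.d}

/-- The quotient `L/↓B ≅ ↑B` of the pentagon. -/
def UpB : Type := {x : Pent // Pent.b ≤ x}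

/-- The quotient `L/↓D ≅ ↑D` of the pentagon. -/
def UpD : Type := {x : Pent // Pent.d ≤ x}

instance : DecidableEq DownB := inferInstanceAs (DecidableEq {x : Pent // x ≤ Pent.b})
instance : DecidableEq DownD := inferInstanceAs (DecidableEq {x : Pent // x ≤ Pent.d})
instance : DecidableEq UpB := inferInstanceAs (DecidableEq {x : Pent // Pent.b ≤ x})
instance : DecidableEq UpD := inferInstanceAs (DecidableEq {x : Pent // Pent.d ≤ x})
instance : Fintype DownB := inferInstanceAs (Fintype {x : Pent // x ≤ Pent.b})
instance : Fintype DownD := inferInstanceAs (Fintype {x : Pent // x ≤ Pent.d})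
instance : Fintype UpB := inferInstanceAs (Fintype {x : Pent // Pent.b ≤ x})
instance : Fintype UpD := inferInstanceAs (Fintype {x : Pent // Pent.d ≤ x})

instance : CommMonoid DownB where
  mul x y := ⟨x.1 ⊔ y.1, sup_le x.2 y.2⟩
  one := ⟨Pent.zero, by decide⟩
  mul_assoc := by decide
  one_mul := by decide
  mul_one := by decide
  mul_comm := by decide

instance : CommMonoid DownD where
  mul x y := ⟨x.1 ⊔ y.1, sup_le x.2 y.2⟩
  one := ⟨Pent.zero, by decide⟩
  mul_assoc := by decide
  one_mul := by decide
  mul_one := by decide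
  mul_comm := by decide

instance : CommMonoid UpB where
  mul x y := ⟨x.1 ⊔ y.1, le_trans x.2 le_sup_left⟩
  one := ⟨Pent.b, le_refl _⟩
  mul_assoc := by decide
  one_mul := by decide
  mul_one := by decide
  mul_comm := by decide

instance : CommMonoid UpD where
  mul x y := ⟨x.1 ⊔ y.1, le_trans x.2 le_sup_left⟩
  one := ⟨Pent.d, le_refl _⟩
  mul_assoc := by decide
  one_mul := by decide
  mul_one := by decide
  mul_comm := by decide

/-- The inclusion `↓B ↪ L`. -/
def inclB : DownB →* Pent where
  toFun x := x.1
  map_one' := by decide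
  map_mul' := by decide

/-- The inclusion `↓D ↪ L`. -/
def inclD : DownD →* Pent where
  toFun x := x.1
  map_one' := by decide
  map_mul' := by decide

/-- The projection `L ↠ L/↓B ≅ ↑B`, `l ↦ l ⊔ B`. -/
def projB : Pent →* UpB where
  toFun l := ⟨l ⊔ Pent.b, le_sup_right⟩
  map_one' := rfl
  map_mul' := by intro x y; cases x <;> cases y <;> rfl

/-- The projection `L ↠ L/↓D ≅ ↑D`, `l ↦ l ⊔ D`. -/
def projD : Pent →* UpD where
  toFun l := ⟨l ⊔ Pent.d, le_sup_right⟩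
  map_one' := rfl
  map_mul' := by intro x y; cases x <;> cases y <;> rfl

/-- The antinormal morphism `α : ↓D ↪ L ↠ L/↓B`. -/
def alpha : DownD →* UpB := projB.comp inclD

/-- The dinverse antinormal morphism `β : ↓B ↪ L ↠ L/↓D`. -/
def beta : DownB →* UpD := projD.comp inclB

/-- A morphism of `CommMon` is a *normal epimorphism* if it is a cokernel of some
morphism: there is `u : P →* A` such that `e` is trivial on the image of `u` and `e` is
universal with this property. -/
def IsCokernelHom {A B : Type} [CommMonoid A] [CommMonoid B] (e : A →* B) : Prop :=
  ∃ (P : Type) (_ : CommMonoid P) (u : P →* A),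
    (∀ p : P, e (u p) = 1) ∧
    ∀ (T : Type) (_ : CommMonoid T) (h : A →* T), (∀ p : P, h (u p) = 1) →
      ∃! g : B →* T, g.comp e = h

/-- A morphism of `CommMon` is a *normal monomorphism* if it is a kernel of some
morphism: there is `v : B →* Q` such that `v ∘ m` is trivial and `m` is universal with
this property. -/
def IsKernelHom {A B : Type} [CommMonoid A] [CommMonoid B] (m : A →* B) : Prop :=
  ∃ (Q : Type) (_ : CommMonoid Q) (v : B →* Q),
    (∀ x : A, v (m x) = 1) ∧
    ∀ (T : Type) (_ : CommMonoid T) (h : T →* B), (∀ t : T, v (h t) = 1) →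
      ∃! g : T →* A, m.comp g = h

/-- A morphism of `CommMon` is *normal* if it factors as a normal epimorphism followed by
a normal monomorphism. -/
def IsNormalHom {A B : Type} [CommMonoid A] [CommMonoid B] (f : A →* B) : Prop :=
  ∃ (I : Type) (_ : CommMonoid I) (e : A →* I) (m : I →* B),
    IsCokernelHom e ∧ IsKernelHom m ∧ m.comp e = f

/-- A kernel hom is injective. -/
lemma IsKernelHom.injective {A B : Type} [CommMonoid A] [CommMonoid B] {m : A →* B}
    (hk : IsKernelHom m) : Function.Injective m := by
  obtain ⟨Q, _, v, hv, huniv⟩ := hk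
  intro x y hxy
  obtain ⟨g, hg, hu⟩ := huniv (Multiplicative ℕ) inferInstance
    (m.comp (powersHom A x)) (fun t => hv _)
  have h1 : powersHom A x = g := hu _ rfl
  have h2 : powersHom A y = g := by
    refine hu _ ?_
    ext
    simp only [MonoidHom.comp_apply, powersHom_apply, map_pow, hxy]
  have : powersHom A x (Multiplicative.ofAdd 1) = powersHom A y (Multiplicative.ofAdd 1) := by
    rw [h1, h2]
  simpa using this

lemma alpha_bij : Function.Bijective alpha := by decide

noncomputable def alphaEquiv : DownD ≃* UpB := MulEquiv.ofBijective alpha alpha_bij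

lemma isNormal_alpha : IsNormalHom alpha := by
  refine ⟨UpB, inferInstance, alphaEquiv.toMonoidHom, MonoidHom.id UpB, ?_, ?_, ?_⟩
  · refine ⟨PUnit, inferInstance, 1, fun p => by simp, ?_⟩
    intro T _ h _
    refine ⟨h.comp (alphaEquiv.symm : UpB →* DownD), ?_, ?_⟩
    · ext x
      simp
    · intro g' hg'
      ext y
      have : y = alphaEquiv (alphaEquiv.symm y) := (alphaEquiv.apply_symm_apply y).symm
      rw [this]
      have := congrArg (fun f : DownD →* T => f (alphaEquiv.symm y)) hg'
      simpa using this
  · refine ⟨PUnit, inferInstance, 1, fun x => rfl, ?_⟩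
    intro T _ h _
    exact ⟨h, rfl, fun g' hg' => by simpa using hg'⟩
  · ext x; rfl

lemma isKernel_inclB : IsKernelHom inclB := by
  refine ⟨UpB, inferInstance, projB, by decide, ?_⟩
  intro T _ h hh
  have hle : ∀ t : T, h t ≤ Pent.b := by
    intro t
    have := congrArg Subtype.val (hh t)
    exact sup_eq_right.mp this
  refine ⟨{ toFun := fun t => ⟨h t, hle t⟩,
            map_one' := Subtype.ext h.map_one,
            map_mul' := fun x y => Subtype.ext (h.map_mul x y) }, ?_, ?_⟩
  · ext t; rfl
  · intro g' hg'
    ext t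
    exact Subtype.ext (congrArg (fun f : T →* Pent => f t) hg')

lemma isCokernel_projD : IsCokernelHom projD := by
  refine ⟨DownD, inferInstance, inclD, by decide, ?_⟩
  intro T _ h hh
  have hd : h Pent.d = 1 := hh ⟨Pent.d, by decide⟩
  refine ⟨{ toFun := fun x => h x.1,
            map_one' := hd,
            map_mul' := fun x y => h.map_mul x.1 y.1 }, ?_, ?_⟩
  · ext l
    show h (l * Pent.d) = h l
    rw [h.map_mul, hd, mul_one]
  · intro g' hg'
    ext x
    have hx : projD x.1 = x := Subtype.ext (sup_eq_left.mpr x.2)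
    have := congrArg (fun f : Pent →* T => f x.1) hg'
    simp only [MonoidHom.comp_apply, hx] at this
    exact this

lemma not_normal_beta : ¬ IsNormalHom beta := by
  rintro ⟨I, _, e, m, ⟨P, _, u, hu, euniv⟩, hm, hcomp⟩
  have minj : Function.Injective m := hm.injective
  have hbc : beta ⟨Pent.b, le_refl _⟩ = beta ⟨Pent.c, by decide⟩ := by decide
  have hebc : e ⟨Pent.b, le_refl _⟩ = e ⟨Pent.c, by decide⟩ := by
    apply minj
    have h1 := congrArg (fun f : DownB →* UpD => f ⟨Pent.b, le_refl _⟩) hcomp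
    have h2 := congrArg (fun f : DownB →* UpD => f ⟨Pent.c, by decide⟩) hcomp
    change m (e _) = beta _ at h1 h2
    rw [h1, h2, hbc]
  have hne1 : ∀ x : DownB, beta x ≠ 1 → e x ≠ 1 := by
    intro x hx he
    apply hx
    have := congrArg (fun f : DownB →* UpD => f x) hcomp
    simp only [MonoidHom.comp_apply] at this
    rw [← this, he, map_one]
  have heb : e ⟨Pent.b, le_refl _⟩ ≠ 1 := hne1 _ (by decide)
  have hec : e ⟨Pent.c, by decide⟩ ≠ 1 := hne1 _ (by decide)
  have hu1 : ∀ p : P, u p = 1 := by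
    intro p
    have hup := hu p
    rcases hq : u p with ⟨x, hx⟩
    rw [hq] at hup
    cases x with
    | zero => rfl
    | c => exact absurd hup hec
    | b => exact absurd hup heb
    | d => exact absurd hx (by decide)
    | a => exact absurd hx (by decide)
  obtain ⟨g, hg, -⟩ := euniv DownB inferInstance (MonoidHom.id DownB)
    (fun p => by rw [hu1 p]; rfl)
  have hb := congrArg (fun f : DownB →* DownB => f ⟨Pent.b, le_refl _⟩) hg
  have hc := congrArg (fun f : DownB →* DownB => f ⟨Pent.c, by decide⟩) hg
  change g (e ⟨Pent.b, le_refl _⟩) = (⟨Pent.b, le_refl _⟩ : DownB) at hb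
  change g (e ⟨Pent.c, by decide⟩) = (⟨Pent.c, by decide⟩ : DownB) at hc
  have : (⟨Pent.b, le_refl _⟩ : DownB) = ⟨Pent.c, by decide⟩ := by
    rw [← hb, ← hc, hebc]
  exact absurd this (by decide)

/-- Dinversion does not preserve normal maps in the category of
commutative monoids.  In the pentagon monoidal semilattice `Pent`:
(1) the composite `α : ↓D ↪ L ↠ L/↓B` is an isomorphism of monoids, hence a normal
morphism;
(2) its dinverse `β : ↓B ↪ L ↠ L/↓D` sends both `B` and `C` to `A`, hence is not
injective;
(3) `β` is antinormal (it is the normal monomorphism `↓B ↪ L` followed by the normal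
epimorphism `L ↠ L/↓D`), but it is not a normal morphism: it admits no factorization as
a normal epimorphism followed by a normal monomorphism in `CommMon`. -/
theorem stmt11 :
    (Function.Bijective alpha ∧ IsNormalHom alpha) ∧
    (beta ⟨Pent.b, le_refl _⟩ = ⟨Pent.a, by decide⟩ ∧
      beta ⟨Pent.c, by decide⟩ = ⟨Pent.a, by decide⟩ ∧
      ¬ Function.Injective beta) ∧
    (IsKernelHom inclB ∧ IsCokernelHom projD ∧ beta = projD.comp inclB ∧
      ¬ IsNormalHom beta) := by
  exact ⟨⟨alpha_bij, isNormal_alpha⟩,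
    ⟨rfl, rfl, by decide⟩,
    ⟨isKernel_inclB, isCokernel_projD, rfl, not_normal_beta⟩⟩
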